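/- Let H be a real Hilbert space and fix z ∈ H. For each nonempty compact convex subset C of H let Ω_C denote the (unique) point of C closest to z. Then the map C ↦ Ω_C is continuous for the Hausdorff metric: for every nonempty compact convex subset D of H and every ε > 0 there is δ > 0 such that every nonempty compact convex subset C of H with dist_H(C,D) < δ satisfies ‖Ω_C − Ω_D‖ < ε. -/

import Mathlib

/-- **Proposition 10.10 of Rieffel.** Let `H` be a real Hilbert space and fix `z ∈ H`.
For each nonempty compact convex subset `C` of `H` let `Ω_C` denote the point of `C`
closest to `z`. Then `C ↦ Ω_C` is continuous for the Hausdorff metric: for every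
nonempty compact convex `D ⊆ H` and every `ε > 0` there is `δ > 0` such that for
every nonempty compact convex `C ⊆ H` with `dist_H(C, D) < δ`, the closest points
satisfy `‖Ω_C − Ω_D‖ < ε`. -/
theorem closest_point_continuous_hausdorff {H : Type*}
    [NormedAddCommGroup H] [InnerProductSpace ℝ H]
    (z : H) (D : Set H) (hDne : D.Nonempty) (hDc : IsCompact D) (hDv : Convex ℝ D)
    (ε : ℝ) (hε : 0 < ε) :
    ∃ δ : ℝ, 0 < δ ∧
      ∀ C : Set H, C.Nonempty → IsCompact C → Convex ℝ C →
        Metric.hausdorffDist C D < δ →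
        ∀ p q : H, p ∈ C → q ∈ D →
          (∀ c ∈ C, ‖p - z‖ ≤ ‖c - z‖) → (∀ d ∈ D, ‖q - z‖ ≤ ‖d - z‖) →
          ‖p - q‖ < ε := by
  obtain ⟨d₀, hd₀⟩ := hDne
  set M : ℝ := ‖d₀ - z‖ with hM
  have hM0 : 0 ≤ M := norm_nonneg _
  refine ⟨min 1 (min (ε / 2) (ε ^ 2 / (16 * (M + 1)))), by positivity, ?_⟩
  intro C hCne hCc hCv hCD p q hp hq hpmin hqmin
  set δ : ℝ := min 1 (min (ε / 2) (ε ^ 2 / (16 * (M + 1)))) with hδdef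
  have hδ1 : δ ≤ 1 := min_le_left _ _
  have hδε : δ ≤ ε / 2 := le_trans (min_le_right _ _) (min_le_left _ _)
  have hδε2 : δ ≤ ε ^ 2 / (16 * (M + 1)) := le_trans (min_le_right _ _) (min_le_right _ _)
  have hδ0 : 0 < δ := by positivity
  have hfin : EMetric.hausdorffEdist C D ≠ ⊤ :=
    Metric.hausdorffEdist_ne_top_of_nonempty_of_bounded hCne ⟨d₀, hd₀⟩
      hCc.isBounded hDc.isBounded
  obtain ⟨d, hd, hpd⟩ := Metric.exists_dist_lt_of_hausdorffDist_lt hp hCD hfin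
  obtain ⟨c, hc, hqc⟩ := Metric.exists_dist_lt_of_hausdorffDist_lt' hq hCD hfin
  -- p close to d ∈ D, q close to c ∈ C
  have hpd' : ‖p - d‖ < δ := by rwa [← dist_eq_norm]
  have hqc' : ‖c - q‖ < δ := by rwa [← dist_eq_norm]
  have h1 : ‖p - z‖ ≤ ‖q - z‖ + δ := by
    calc ‖p - z‖ ≤ ‖c - z‖ := hpmin c hc
    _ = ‖(c - q) + (q - z)‖ := by rw [sub_add_sub_cancel]
    _ ≤ ‖c - q‖ + ‖q - z‖ := norm_add_le _ _
    _ ≤ ‖q - z‖ + δ := by linarith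
  have h2 : ‖d - z‖ ≤ ‖q - z‖ + 2 * δ := by
    calc ‖d - z‖ = ‖(d - p) + (p - z)‖ := by rw [sub_add_sub_cancel]
    _ ≤ ‖d - p‖ + ‖p - z‖ := norm_add_le _ _
    _ ≤ δ + (‖q - z‖ + δ) := by
        have : ‖d - p‖ = ‖p - d‖ := norm_sub_rev _ _
        linarith
    _ = ‖q - z‖ + 2 * δ := by ring
  -- the variational inequality at q
  haveI : Nonempty D := ⟨⟨d₀, hd₀⟩⟩
  have hinf : ‖z - q‖ = ⨅ w : D, ‖z - w‖ := by
    have hbdd : BddBelow (Set.range fun w : D => ‖z - w‖) := ⟨0, by rintro x ⟨w, rfl⟩; positivity⟩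
    refine le_antisymm (le_ciInf fun w => ?_) (ciInf_le hbdd ⟨q, hq⟩)
    rw [norm_sub_rev, norm_sub_rev z w]
    exact hqmin w w.2
  have hinner : ∀ w ∈ D, inner ℝ (z - q) (w - q) ≤ (0 : ℝ) :=
    (norm_eq_iInf_iff_real_inner_le_zero hDv hq).mp hinf
  have hin : inner ℝ (d - q) (z - q) ≤ (0 : ℝ) := by
    rw [real_inner_comm]; exact hinner d hd
  -- key quadratic estimate
  have hkey : ‖d - q‖ ^ 2 ≤ ‖d - z‖ ^ 2 - ‖q - z‖ ^ 2 := by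
    have hexp : ‖(d - q) - (z - q)‖ ^ 2
        = ‖d - q‖ ^ 2 - 2 * inner ℝ (d - q) (z - q) + ‖z - q‖ ^ 2 :=
      norm_sub_sq_real _ _
    have h3 : (d - q) - (z - q) = d - z := by abel
    have h4 : ‖z - q‖ = ‖q - z‖ := norm_sub_rev _ _
    rw [h3, h4] at hexp
    nlinarith
  have hqzM : ‖q - z‖ ≤ M := hqmin d₀ hd₀
  have hdq2 : ‖d - q‖ ^ 2 ≤ ε ^ 2 / 4 := by
    have hM1 : (0 : ℝ) < M + 1 := by linarith
    have : ‖d - z‖ ^ 2 - ‖q - z‖ ^ 2 ≤ 4 * δ * (M + 1) := by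
      nlinarith [norm_nonneg (q - z), norm_nonneg (d - z), h2]
    have h16 : 4 * δ * (M + 1) ≤ ε ^ 2 / 4 := by
      have h := (le_div_iff₀ (by positivity : (0:ℝ) < 16 * (M + 1))).mp hδε2
      nlinarith [h]
    linarith
  have hdq : ‖d - q‖ ≤ ε / 2 := by
    nlinarith [norm_nonneg (d - q)]
  calc ‖p - q‖ = ‖(p - d) + (d - q)‖ := by rw [sub_add_sub_cancel]
  _ ≤ ‖p - d‖ + ‖d - q‖ := norm_add_le _ _
  _ < δ + ε / 2 := by linarith
  _ ≤ ε := by linarith
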